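/- Let $A$ be a commutative ring containing $\mathbb{Q}$ and $M \subseteq A$ a quadratic module. If $(A, M)$ has an order unit, then $M$ is archimedean (i.e., 1 is also an order unit: $A = \mathbb{Z} + M$). -/

import Mathlib

/-- If `ℚ ⊆ A` and `M` is a quadratic module in `A` such that `(A,M)` has an order
unit, then `M` is archimedean, i.e. `A = ℤ + M`. -/
theorem archimedean_of_orderUnit {A : Type*} [CommRing A] [Algebra ℚ A] (M : Set A)
    (hM0 : (0 : A) ∈ M) (hM1 : (1 : A) ∈ M)
    (hMadd : ∀ x ∈ M, ∀ y ∈ M, x + y ∈ M)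
    (hsq : ∀ a : A, ∀ m ∈ M, a ^ 2 * m ∈ M)
    (hord : ∃ u ∈ M, ∀ a : A, ∃ m ∈ M, ∃ n : ℤ, a = m + n • u) :
    ∀ a : A, ∃ n : ℕ, (n : A) - a ∈ M := by
  obtain ⟨u, huM, hu⟩ := hord
  set f := algebraMap ℚ A with hf
  -- squares are in M
  have hsq' : ∀ a : A, a ^ 2 ∈ M := fun a => by simpa using hsq a 1 hM1
  -- natural multiples of elements of M are in M
  have hmul : ∀ (n : ℕ) (x : A), x ∈ M → (n : A) * x ∈ M := by
    intro n
    induction n with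
    | zero => intro x hx; simpa using hM0
    | succ k ih =>
      intro x hx
      have := hMadd _ (ih x hx) _ hx
      have h : ((k + 1 : ℕ) : A) * x = (k : A) * x + x := by push_cast; ring
      rw [h]; exact this
  -- nonneg rationals are in M
  have hqpos : ∀ q : ℚ, 0 ≤ q → f q ∈ M := by
    intro q hq
    have hd : ((q.den : ℚ)) ≠ 0 := Nat.cast_ne_zero.mpr q.den_nz
    have hn : ((q.num.toNat : ℕ) : ℚ) = (q.num : ℚ) := by
      exact_mod_cast congrArg (Int.cast : ℤ → ℚ) (Int.toNat_of_nonneg (Rat.num_nonneg.mpr hq))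
    have h2 : (q.num : ℚ) = q * q.den := (div_eq_iff hd).mp (Rat.num_div_den q)
    have key : q = ((q.num.toNat * q.den : ℕ) : ℚ) * (1 / (q.den : ℚ)) ^ 2 := by
      rw [Nat.cast_mul, hn]
      field_simp
      linear_combination -h2
    rw [key, map_mul, map_natCast, map_pow]
    exact hmul _ _ (hsq' _)
  -- bound the order unit: ∃ nu : ℕ, nu - u ∈ M
  have hubound : ∃ nu : ℕ, (nu : A) - u ∈ M := by
    obtain ⟨m, hm, k, hk⟩ := hu (-(u * u))
    -- hk : -(u*u) = m + k • u
    have hk' : -(u * u) = m + (k : A) * u := by rw [hk, zsmul_eq_mul]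
    set q0 : ℚ := ((k : ℚ) / 2 - 1 / 2) ^ 2 with hq0
    have hq0pos : 0 ≤ q0 := sq_nonneg _
    refine ⟨⌈q0⌉.toNat, ?_⟩
    have hceil : q0 ≤ ((⌈q0⌉.toNat : ℕ) : ℚ) := by
      have h1 : (0 : ℤ) ≤ ⌈q0⌉ := Int.ceil_nonneg hq0pos
      have := Int.le_ceil q0
      calc q0 ≤ (⌈q0⌉ : ℚ) := Int.le_ceil q0
        _ = ((⌈q0⌉.toNat : ℕ) : ℚ) := by exact_mod_cast congrArg (Int.cast : ℤ → ℚ) (Int.toNat_of_nonneg h1).symm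
    set s : A := f ((k : ℚ) / 2) with hs
    set h : A := f (1 / 2 : ℚ) with hh
    have h2h : h + h = 1 := by rw [hh, ← map_add]; norm_num
    have h2s : s + s = (k : A) := by
      rw [hs, ← map_add]
      have : (k : ℚ) / 2 + (k : ℚ) / 2 = ((k : ℤ) : ℚ) := by ring
      rw [this, map_intCast]
    have hfq0 : f q0 = (s - h) ^ 2 := by
      rw [hq0, map_pow, map_sub, hs, hh]
    have key : ((⌈q0⌉.toNat : ℕ) : A) - u
        = f (((⌈q0⌉.toNat : ℕ) : ℚ) - q0) + (m + (u + s - h) ^ 2) := by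
      rw [map_sub, map_natCast, hfq0]
      linear_combination hk' - u * h2s + u * h2h
    rw [key]
    exact hMadd _ (hqpos _ (by linarith)) _ (hMadd _ hm _ (hsq' _))
  obtain ⟨nu, hnu⟩ := hubound
  intro a
  obtain ⟨m, hm, k, hk⟩ := hu (-a)
  have hk' : -a = m + (k : A) * u := by rw [hk, zsmul_eq_mul]
  rcases le_or_gt 0 k with hk0 | hk0
  · refine ⟨0, ?_⟩
    have hkk : ((k.toNat : ℕ) : A) = (k : A) := by
      rw [← Int.cast_natCast, Int.toNat_of_nonneg hk0]
    have key : ((0 : ℕ) : A) - a = m + ((k.toNat : ℕ) : A) * u := by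
      rw [hkk]; push_cast; linear_combination hk'
    rw [key]
    exact hMadd _ hm _ (hmul _ _ huM)
  · set j : ℕ := (-k).toNat with hj
    have hjk : ((j : ℕ) : A) = -(k : A) := by
      rw [hj, ← Int.cast_natCast, Int.toNat_of_nonneg (by omega : (0:ℤ) ≤ -k)]
      push_cast; ring
    refine ⟨j * nu, ?_⟩
    have key : ((j * nu : ℕ) : A) - a = m + (j : A) * ((nu : A) - u) := by
      push_cast
      rw [hjk] at *
      linear_combination hk' - u * hjk
    rw [key]
    exact hMadd _ hm _ (hmul _ _ hnu)
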